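/- arXiv:1210.5034 — 6 statements merged into one kernel-verified Lean document; each statement's English description precedes it below -/
import Mathlib

section
/- Fix reals L, A, ρ, C_in, C_out > 0, a real α > 0 and a real R > 0, and assume ρ < 6·√(2·L·A)·R. For an integer k ≥ 1 and a vector l = (l_1,…,l_k) with every l_i ∈ [1,∞), call the pair (k,l) feasible if (L/(2k))·(R + 3·Σ_{i=1}^k √(2A/(L·l_i^α)))² ≤ ρ. Let k* ≥ 1 be an integer attaining the minimum of φ(k) = k·C_in·(C(k)/k)^(−2/α) + k·C_out over all integers k ≥ 1 with C(k) > 0, and set l*_i = (C(k*)/k*)^(−2/α) for i = 1,…,k*. Then (k*, l*) is feasible and for every feasible pair (k, l) one has C_in·Σ_{i=1}^{k*} l*_i + k*·C_out ≤ C_in·Σ_{i=1}^{k} l_i + k·C_out. -/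
open Real Finset

/-- weighted AM-GM: for `u > 0`, `p > 0`, `1 + p ≤ u ^ (-p) + p * u`. -/
lemma amgm_tangent {p u : ℝ} (hp : 0 < p) (hu : 0 < u) :
    1 + p ≤ u ^ (-p) + p * u := by
  have h1p : (0:ℝ) < 1 + p := by linarith
  have h := Real.geom_mean_le_arith_mean2_weighted
    (w₁ := 1/(1+p)) (w₂ := p/(1+p)) (p₁ := u ^ (-p)) (p₂ := u)
    (by positivity) (by positivity) (Real.rpow_nonneg hu.le _) hu.le
    (by field_simp)
  have hgm : (u ^ (-p)) ^ (1/(1+p)) * u ^ (p/(1+p)) = 1 := by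
    nth_rewrite 2 [← Real.rpow_one u]
    rw [← Real.rpow_mul hu.le, ← Real.rpow_mul hu.le, ← Real.rpow_add hu,
      show -p * (1/(1+p)) + 1 * (p/(1+p)) = 0 by field_simp; ring, Real.rpow_zero]
  rw [hgm] at h
  have h2 : 1 * (1+p) ≤ (1/(1+p) * u ^ (-p) + p/(1+p) * u) * (1+p) :=
    mul_le_mul_of_nonneg_right h h1p.le
  calc 1 + p = 1 * (1+p) := by ring
    _ ≤ (1/(1+p) * u ^ (-p) + p/(1+p) * u) * (1+p) := h2
    _ = u ^ (-p) + p * u := by field_simp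

/-- tangent-line inequality for the convex map `x ↦ x^(-p)` at `c`. -/
lemma tangent_line {p c x : ℝ} (hp : 0 < p) (hc : 0 < c) (hx : 0 < x) :
    (1 + p) * c ^ (-p) - p * c ^ (-(p+1)) * x ≤ x ^ (-p) := by
  have h := amgm_tangent hp (div_pos hx hc)
  have e1 : (x/c) ^ (-p) = x ^ (-p) * c ^ p := by
    rw [Real.div_rpow hx.le hc.le, Real.rpow_neg hc.le, div_eq_mul_inv, inv_inv]
  have e2 : c ^ p * c ^ (-p) = 1 := by
    rw [← Real.rpow_add hc]; norm_num
  have e3 : c ^ (-(p+1)) * c = c ^ (-p) := by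
    nth_rewrite 2 [← Real.rpow_one c]
    rw [← Real.rpow_add hc]; norm_num
  rw [e1] at h
  have h2 := mul_le_mul_of_nonneg_right h (Real.rpow_nonneg hc.le (-p))
  have hxc : p * (x / c) * c ^ (-p) = p * c ^ (-(p+1)) * x := by
    rw [← e3]; field_simp
  have h3 : (x ^ (-p) * c ^ p + p * (x / c)) * c ^ (-p)
      = x ^ (-p) + p * c ^ (-(p+1)) * x := by
    rw [add_mul, mul_assoc, e2, mul_one, hxc]
  rw [h3] at h2
  linarith

set_option maxHeartbeats 1600000 in
/-- Proposition 2 (basic outer scheme, sublinear inner rate): the computationally optimal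
strategy uses a constant number of inner iterations `lstar = (C k*/k*)^(-2/α)`. -/
theorem stmt_0 (L A ρ Cin Cout α R : ℝ)
    (hL : 0 < L) (hA : 0 < A) (hρ : 0 < ρ) (hCin : 0 < Cin) (hCout : 0 < Cout)
    (hα : 0 < α) (hR : 0 < R)
    (hthresh : ρ < 6 * Real.sqrt (2 * L * A) * R)
    (C : ℕ → ℝ)
    (hC : ∀ k : ℕ, C k = Real.sqrt L / (3 * Real.sqrt (2 * A)) *
      (Real.sqrt (2 * k * ρ / L) - R))
    (feasible : ℕ → (ℕ → ℝ) → Prop)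
    (hfeas : ∀ (k : ℕ) (l : ℕ → ℝ), feasible k l ↔
      1 ≤ k ∧ (∀ i ∈ Finset.Icc 1 k, (1 : ℝ) ≤ l i) ∧
        L / (2 * k) *
          (R + 3 * ∑ i ∈ Finset.Icc 1 k, Real.sqrt (2 * A / (L * l i ^ α))) ^ 2 ≤ ρ)
    (φ : ℕ → ℝ)
    (hφ : ∀ k : ℕ, φ k = k * Cin * (C k / k) ^ (-(2 / α)) + k * Cout)
    (kstar : ℕ) (hk1 : 1 ≤ kstar) (hCpos : 0 < C kstar)
    (hmin : ∀ k : ℕ, 1 ≤ k → 0 < C k → φ kstar ≤ φ k)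
    (lstar : ℝ) (hlstar : lstar = (C kstar / kstar) ^ (-(2 / α))) :
    feasible kstar (fun _ => lstar) ∧
      ∀ (k : ℕ) (l : ℕ → ℝ), feasible k l →
        Cin * (∑ _i ∈ Finset.Icc 1 kstar, lstar) + kstar * Cout ≤
          Cin * (∑ i ∈ Finset.Icc 1 k, l i) + k * Cout := by
  have hα0 : α ≠ 0 := ne_of_gt hα
  have hA2 : (0:ℝ) < 2 * A := by linarith
  have hsL0 : 0 < Real.sqrt L := Real.sqrt_pos.2 hL
  have hsA0 : 0 < Real.sqrt (2*A) := Real.sqrt_pos.2 hA2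
  have hsL2 : Real.sqrt L ^ 2 = L := Real.sq_sqrt hL.le
  have hsA2 : Real.sqrt (2*A) ^ 2 = 2*A := Real.sq_sqrt hA2.le
  have h2LA : Real.sqrt (2*L*A) = Real.sqrt L * Real.sqrt (2*A) := by
    rw [show 2*L*A = (Real.sqrt L * Real.sqrt (2*A))^2 by
      rw [mul_pow, hsL2, hsA2]; ring, Real.sqrt_sq (by positivity)]
  rw [h2LA] at hthresh
  have hsk : ∀ k : ℕ, (Real.sqrt (2*k*ρ/L))^2 = 2*k*ρ/L := fun k =>
    Real.sq_sqrt (by positivity)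
  -- `C k < k` for every `k ≥ 1`, thanks to the threshold assumption
  have hClt : ∀ k : ℕ, 1 ≤ k → C k < k := by
    intro k hk
    have hk0 : (0:ℝ) < k := by exact_mod_cast hk
    have h1 : Real.sqrt L ^ 2 * Real.sqrt (2*k*ρ/L) ^ 2 = 2*k*ρ := by
      rw [hsk k, hsL2]; field_simp
    have hs0 : (0:ℝ) ≤ Real.sqrt (2*k*ρ/L) := Real.sqrt_nonneg _
    have hX : (0:ℝ) ≤ Real.sqrt L * Real.sqrt (2*k*ρ/L)
        + (Real.sqrt L * R + 3 * Real.sqrt (2*A) * k) := by positivity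
    rw [hC k, div_mul_eq_mul_div, div_lt_iff₀ (by positivity)]
    nlinarith [h1, sq_nonneg (Real.sqrt L * R - 3 * Real.sqrt (2*A) * (k:ℝ)),
      mul_lt_mul_of_pos_left hthresh hk0, hX, mul_nonneg hsL0.le hs0]
  -- the basic computation for each term of the sums
  have hterm : ∀ x : ℝ, 1 ≤ x →
      Real.sqrt (2*A/(L * x ^ α)) = Real.sqrt (2*A) / Real.sqrt L * x ^ (-(α/2)) := by
    intro x hx
    have hx0 : (0:ℝ) < x := lt_of_lt_of_le one_pos hx
    have hxα : 0 < x ^ α := Real.rpow_pos_of_pos hx0 _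
    have hmsq : (x ^ (-(α/2)))^2 * x ^ α = 1 := by
      rw [sq, ← Real.rpow_add hx0, ← Real.rpow_add hx0,
        show -(α/2) + -(α/2) + α = 0 by ring, Real.rpow_zero]
    have hinv : (x ^ (-(α/2)))^2 = (x ^ α)⁻¹ := eq_inv_of_mul_eq_one_left hmsq
    have key : (Real.sqrt (2*A) / Real.sqrt L * x ^ (-(α/2)))^2 = 2*A/(L * x ^ α) := by
      rw [mul_pow, div_pow, hsL2, hsA2, hinv]
      field_simp
    rw [← key, Real.sqrt_sq (by positivity)]
  -- main lower bound for any feasible pair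
  have key : ∀ (k : ℕ) (l : ℕ → ℝ), feasible k l →
      0 < C k ∧ (k:ℝ) * (C k / k) ^ (-(2/α)) ≤ ∑ i ∈ Finset.Icc 1 k, l i := by
    intro k l hf
    rw [hfeas] at hf
    obtain ⟨hk1', hl1', hbound⟩ := hf
    have hk0' : (0:ℝ) < k := by exact_mod_cast hk1'
    have hlpos : ∀ i ∈ Finset.Icc 1 k, (0:ℝ) < l i := fun i hi =>
      lt_of_lt_of_le one_pos (hl1' i hi)
    have hmpos : ∀ i ∈ Finset.Icc 1 k, (0:ℝ) < l i ^ (-(α/2)) := fun i hi =>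
      Real.rpow_pos_of_pos (hlpos i hi) _
    have hne : (Finset.Icc 1 k).Nonempty := Finset.nonempty_Icc.2 hk1'
    have hM0 : 0 < ∑ i ∈ Finset.Icc 1 k, l i ^ (-(α/2)) := Finset.sum_pos hmpos hne
    obtain ⟨M, hM⟩ : ∃ M, ∑ i ∈ Finset.Icc 1 k, l i ^ (-(α/2)) = M := ⟨_, rfl⟩
    rw [hM] at hM0
    have hsum_t : ∑ i ∈ Finset.Icc 1 k, Real.sqrt (2*A/(L * l i ^ α))
        = Real.sqrt (2*A) / Real.sqrt L * M := by
      rw [← hM, Finset.mul_sum]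
      exact Finset.sum_congr rfl (fun i hi => hterm (l i) (hl1' i hi))
    rw [hsum_t] at hbound
    obtain ⟨s, hs⟩ : ∃ s, Real.sqrt (2*k*ρ/L) = s := ⟨_, rfl⟩
    have hs0 : (0:ℝ) ≤ s := hs ▸ Real.sqrt_nonneg _
    have hs2 : s^2 * L = 2*k*ρ := by rw [← hs, hsk k]; field_simp
    have hT0 : 0 < R + 3 * (Real.sqrt (2*A) / Real.sqrt L * M) := by positivity
    have hb2 : L * (R + 3 * (Real.sqrt (2*A) / Real.sqrt L * M))^2 ≤ ρ * (2*k) := by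
      rw [div_mul_eq_mul_div, div_le_iff₀ (by positivity : (0:ℝ) < 2*k)] at hbound
      exact hbound
    have hTs : R + 3 * (Real.sqrt (2*A) / Real.sqrt L * M) ≤ s := by
      rw [← hs, Real.le_sqrt hT0.le (by positivity)]
      rw [le_div_iff₀ hL]
      nlinarith [hb2]
    have hRs : R < s := by
      have : 0 < Real.sqrt (2*A) / Real.sqrt L * M := by positivity
      linarith
    have hCk : 0 < C k := by
      rw [hC k, hs]
      have : 0 < Real.sqrt L / (3 * Real.sqrt (2*A)) := by positivity
      exact mul_pos this (by linarith)
    refine ⟨hCk, ?_⟩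
    -- M ≤ C k
    have hMC : M ≤ C k := by
      rw [hC k, hs, div_mul_eq_mul_div, le_div_iff₀ (by positivity)]
      have h4 := mul_le_mul_of_nonneg_left hTs hsL0.le
      have h5 : Real.sqrt L * (R + 3 * (Real.sqrt (2*A) / Real.sqrt L * M))
          = Real.sqrt L * R + 3 * Real.sqrt (2*A) * M := by
        field_simp
      rw [h5] at h4
      have h6 : Real.sqrt L * (s - R) = Real.sqrt L * s - Real.sqrt L * R := by ring
      rw [h6]
      linarith [h4]
    -- tangent-line bound for each coordinate
    have hc0 : 0 < C k / k := div_pos hCk hk0'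
    have hkey : ∀ i ∈ Finset.Icc 1 k,
        (1 + 2/α) * (C k/(k:ℝ)) ^ (-(2/α))
          - (2/α) * (C k/(k:ℝ)) ^ (-(2/α+1)) * (l i ^ (-(α/2))) ≤ l i := by
      intro i hi
      have hx0 := hlpos i hi
      have h := tangent_line (p := 2/α) (by positivity) hc0
        (Real.rpow_pos_of_pos hx0 (-(α/2)))
      have e : (l i ^ (-(α/2))) ^ (-(2/α)) = l i := by
        rw [← Real.rpow_mul hx0.le, show -(α/2) * -(2/α) = 1 by field_simp,
          Real.rpow_one]
      rwa [e] at h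
    have hsum_low := Finset.sum_le_sum hkey
    have hsum_eq : ∑ i ∈ Finset.Icc 1 k,
        ((1 + 2/α) * (C k/(k:ℝ)) ^ (-(2/α))
          - (2/α) * (C k/(k:ℝ)) ^ (-(2/α+1)) * (l i ^ (-(α/2))))
        = (k:ℝ) * ((1 + 2/α) * (C k/(k:ℝ)) ^ (-(2/α)))
            - (2/α) * (C k/(k:ℝ)) ^ (-(2/α+1)) * M := by
      rw [Finset.sum_sub_distrib, Finset.sum_const, Nat.card_Icc, Nat.add_sub_cancel,
        nsmul_eq_mul, ← Finset.mul_sum, hM]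
    rw [hsum_eq] at hsum_low
    have h8 : (0:ℝ) ≤ (2/α) * (C k/(k:ℝ)) ^ (-(2/α+1)) := by positivity
    have h9 : (C k/(k:ℝ)) ^ (-(2/α+1)) * (C k) = (C k/(k:ℝ)) ^ (-(2/α)) * k := by
      have hqc : (C k/(k:ℝ)) ^ (-(2/α+1)) * (C k/(k:ℝ)) = (C k/(k:ℝ)) ^ (-(2/α)) := by
        nth_rewrite 2 [← Real.rpow_one (C k/(k:ℝ))]
        rw [← Real.rpow_add hc0, show -(2/α+1) + 1 = -(2/α) by ring]
      have h := congrArg (fun z => z * (k:ℝ)) hqc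
      rwa [mul_assoc, div_mul_cancel₀ _ hk0'.ne'] at h
    have h9q := congrArg (fun z => (2/α) * z) h9
    linarith [hsum_low, h9q, mul_le_mul_of_nonneg_left hMC h8]
  -- feasibility of the proposed pair
  have hk0s : (0:ℝ) < kstar := by exact_mod_cast hk1
  have hc0 : 0 < C kstar / kstar := div_pos hCpos hk0s
  have hc1 : C kstar / kstar < 1 := (div_lt_one hk0s).2 (hClt kstar hk1)
  have hl1 : 1 ≤ lstar := by
    rw [hlstar]
    exact Real.one_le_rpow_of_pos_of_le_one_of_nonpos hc0 hc1.le
      (neg_nonpos.2 (by positivity))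
  have hlm : lstar ^ (-(α/2)) = C kstar / kstar := by
    rw [hlstar, ← Real.rpow_mul hc0.le, show -(2/α) * -(α/2) = 1 by field_simp,
      Real.rpow_one]
  have hfeas_star : feasible kstar (fun _ => lstar) := by
    rw [hfeas]
    refine ⟨hk1, fun i _ => hl1, ?_⟩
    show L / (2 * (kstar:ℝ)) *
      (R + 3 * ∑ _i ∈ Finset.Icc 1 kstar, Real.sqrt (2*A/(L * lstar ^ α)))^2 ≤ ρ
    have hsum_val : (∑ _i ∈ Finset.Icc 1 kstar, Real.sqrt (2*A/(L * lstar ^ α)))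
        = (kstar:ℝ) * (Real.sqrt (2*A) / Real.sqrt L * (C kstar / kstar)) := by
      rw [Finset.sum_const, Nat.card_Icc, Nat.add_sub_cancel, nsmul_eq_mul,
        hterm lstar hl1, hlm]
    rw [hsum_val]
    have e1 : R + 3 * ((kstar:ℝ) * (Real.sqrt (2*A) / Real.sqrt L * (C kstar / kstar)))
        = Real.sqrt (2*kstar*ρ/L) := by
      rw [hC kstar]
      field_simp
      ring
    rw [e1, hsk kstar]
    have : L / (2 * (kstar:ℝ)) * (2*kstar*ρ/L) = ρ := by
      field_simp
    linarith [this.le]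
  refine ⟨hfeas_star, ?_⟩
  intro k l hf
  obtain ⟨hCk, hsum⟩ := key k l hf
  have hk1' : 1 ≤ k := ((hfeas k l).1 hf).1
  have hφle := hmin k hk1' hCk
  rw [hφ kstar, hφ k] at hφle
  have hsum_star : (∑ _i ∈ Finset.Icc 1 kstar, lstar) = (kstar:ℝ) * lstar := by
    rw [Finset.sum_const, Nat.card_Icc, Nat.add_sub_cancel, nsmul_eq_mul]
  rw [hsum_star, hlstar]
  have h10 : (k:ℝ) * Cin * (C k/(k:ℝ)) ^ (-(2/α)) ≤ Cin * ∑ i ∈ Finset.Icc 1 k, l i := by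
    calc (k:ℝ) * Cin * (C k/(k:ℝ)) ^ (-(2/α))
        = Cin * ((k:ℝ) * (C k/(k:ℝ)) ^ (-(2/α))) := by ring
      _ ≤ Cin * ∑ i ∈ Finset.Icc 1 k, l i := mul_le_mul_of_nonneg_left hsum hCin.le
  linarith [hφle, h10]
end

section
/- Fix reals L, A, ρ, C_in, C_out > 0, a real γ ∈ (0,1) and a real R > 0, and assume ρ < 6·√(2·L·A·(1−γ))·R. For an integer k ≥ 1 and a vector l = (l_1,…,l_k) with every l_i ∈ [1,∞), call the pair (k,l) feasible if (L/(2k))·(R + 3·Σ_{i=1}^k √(2A·(1−γ)^{l_i}/L))² ≤ ρ. Let k* ≥ 1 be an integer attaining the minimum of φ(k) = (2k·C_in/ln(1−γ))·ln(C(k)/k) + k·C_out over all integers k ≥ 1 with C(k) > 0, and set l*_i = 2·ln(C(k*)/k*)/ln(1−γ) for i = 1,…,k*. Then (k*, l*) is feasible and for every feasible pair (k, l) one has C_in·Σ_{i=1}^{k*} l*_i + k*·C_out ≤ C_in·Σ_{i=1}^{k} l_i + k·C_out. -/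
open Real Finset

/-- Proposition 3 (basic outer scheme, linear inner rate): the computationally optimal
strategy uses a constant number of inner iterations `lstar = 2 ln(C k*/k*)/ln(1-γ)`. -/
theorem stmt_1 (L A ρ Cin Cout γ R : ℝ)
    (hL : 0 < L) (hA : 0 < A) (hρ : 0 < ρ) (hCin : 0 < Cin) (hCout : 0 < Cout)
    (hγ0 : 0 < γ) (hγ1 : γ < 1) (hR : 0 < R)
    (hthresh : ρ < 6 * Real.sqrt (2 * L * A * (1 - γ)) * R)
    (C : ℕ → ℝ)
    (hC : ∀ k : ℕ, C k = Real.sqrt L / (3 * Real.sqrt (2 * A)) *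
      (Real.sqrt (2 * k * ρ / L) - R))
    (feasible : ℕ → (ℕ → ℝ) → Prop)
    (hfeas : ∀ (k : ℕ) (l : ℕ → ℝ), feasible k l ↔
      1 ≤ k ∧ (∀ i ∈ Finset.Icc 1 k, (1 : ℝ) ≤ l i) ∧
        L / (2 * k) *
          (R + 3 * ∑ i ∈ Finset.Icc 1 k,
            Real.sqrt (2 * A * (1 - γ) ^ (l i) / L)) ^ 2 ≤ ρ)
    (φ : ℕ → ℝ)
    (hφ : ∀ k : ℕ, φ k = 2 * k * Cin / Real.log (1 - γ) * Real.log (C k / k) + k * Cout)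
    (kstar : ℕ) (hk1 : 1 ≤ kstar) (hCpos : 0 < C kstar)
    (hmin : ∀ k : ℕ, 1 ≤ k → 0 < C k → φ kstar ≤ φ k)
    (lstar : ℝ) (hlstar : lstar = 2 * Real.log (C kstar / kstar) / Real.log (1 - γ)) :
    feasible kstar (fun _ => lstar) ∧
      ∀ (k : ℕ) (l : ℕ → ℝ), feasible k l →
        Cin * (∑ _i ∈ Finset.Icc 1 kstar, lstar) + kstar * Cout ≤
          Cin * (∑ i ∈ Finset.Icc 1 k, l i) + k * Cout := by
  have hb0 : (0:ℝ) < 1 - γ := by linarith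
  have hlogb : Real.log (1 - γ) < 0 := Real.log_neg hb0 (by linarith)
  have hlogb' : Real.log (1 - γ) ≠ 0 := ne_of_lt hlogb
  have hsL : (0:ℝ) < Real.sqrt L := Real.sqrt_pos.mpr hL
  have hsA : (0:ℝ) < Real.sqrt (2 * A) := Real.sqrt_pos.mpr (by linarith)
  -- each term under the sqrt rewritten
  have hhalf : ∀ x : ℝ, Real.sqrt ((1 - γ) ^ x) = (1 - γ) ^ (x / 2) := by
    intro x
    rw [Real.sqrt_eq_rpow ((1 - γ) ^ x), ← Real.rpow_mul hb0.le]
    ring_nf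
  have hterm : ∀ x : ℝ, Real.sqrt (2 * A * (1 - γ) ^ x / L)
      = Real.sqrt (2 * A / L) * (1 - γ) ^ (x / 2) := by
    intro x
    rw [show 2 * A * (1 - γ) ^ x / L = 2 * A / L * (1 - γ) ^ x by ring,
      Real.sqrt_mul (by positivity), hhalf]
  have hsqAL : Real.sqrt (2 * A / L) = Real.sqrt (2 * A) / Real.sqrt L :=
    Real.sqrt_div (by linarith) L
  -- threshold: C k ≤ k * sqrt (1-γ)
  have hCle : ∀ k : ℕ, 1 ≤ k → C k ≤ (k : ℝ) * Real.sqrt (1 - γ) := by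
    intro k hk
    have hn : (1:ℝ) ≤ (k:ℝ) := by exact_mod_cast hk
    have hn0 : (0:ℝ) < (k:ℝ) := by linarith
    set s := Real.sqrt (2 * A * (1 - γ) / L) with hs
    have hs0 : 0 ≤ s := Real.sqrt_nonneg _
    have hLs : Real.sqrt (2 * L * A * (1 - γ)) = L * s := by
      have e1 : L ^ 2 * (2 * A * (1 - γ) / L) = 2 * L * A * (1 - γ) := by
        field_simp [hL.ne']
      rw [hs, ← e1, Real.sqrt_mul (by positivity), Real.sqrt_sq hL.le]
    have hρ' : ρ < 6 * (L * s) * R := by rw [← hLs]; exact hthresh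
    have hkey : 2 * (k:ℝ) * ρ / L ≤ (R + 3 * k * s) ^ 2 := by
      rw [div_le_iff₀ hL]
      nlinarith [mul_nonneg (mul_nonneg hL.le (sq_nonneg (R - 3 * (k:ℝ) * s))) hn0.le,
        mul_le_mul_of_nonneg_left hρ'.le (by positivity : (0:ℝ) ≤ 2 * (k:ℝ))]
    have hsq : Real.sqrt (2 * k * ρ / L) ≤ R + 3 * k * s := by
      have h1 : Real.sqrt (2 * k * ρ / L) ≤ Real.sqrt ((R + 3 * k * s) ^ 2) :=
        Real.sqrt_le_sqrt hkey
      rwa [Real.sqrt_sq (by positivity)] at h1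
    rw [hC k]
    have hss : s = Real.sqrt (2 * A) * Real.sqrt (1 - γ) / Real.sqrt L := by
      rw [hs, Real.sqrt_div (by positivity), Real.sqrt_mul (by positivity)]
    calc Real.sqrt L / (3 * Real.sqrt (2 * A)) * (Real.sqrt (2 * k * ρ / L) - R)
        ≤ Real.sqrt L / (3 * Real.sqrt (2 * A)) * (3 * k * s) := by
          apply mul_le_mul_of_nonneg_left (by linarith) (by positivity)
      _ = (k : ℝ) * Real.sqrt (1 - γ) := by
          rw [hss]; field_simp
  -- key reduction: feasibility inequality implies the sum bound
  have key : ∀ (k : ℕ) (l : ℕ → ℝ), 1 ≤ k →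
      L / (2 * k) * (R + 3 * ∑ i ∈ Finset.Icc 1 k,
        Real.sqrt (2 * A * (1 - γ) ^ (l i) / L)) ^ 2 ≤ ρ →
      (∑ i ∈ Finset.Icc 1 k, (1 - γ) ^ (l i / 2)) ≤ C k := by
    intro k l hk hineq
    have hn0 : (0:ℝ) < (k:ℝ) := by exact_mod_cast hk
    set T := ∑ i ∈ Finset.Icc 1 k, (1 - γ) ^ (l i / 2) with hT
    have hT0 : 0 ≤ T := Finset.sum_nonneg fun i _ => (Real.rpow_pos_of_pos hb0 _).le
    have hS : (∑ i ∈ Finset.Icc 1 k, Real.sqrt (2 * A * (1 - γ) ^ (l i) / L))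
        = Real.sqrt (2 * A / L) * T := by
      rw [hT, Finset.mul_sum]
      exact Finset.sum_congr rfl fun i _ => hterm (l i)
    rw [hS] at hineq
    have h2 : (R + 3 * (Real.sqrt (2 * A / L) * T)) ^ 2 ≤ 2 * k * ρ / L := by
      have h := mul_le_mul_of_nonneg_left hineq
        (by positivity : (0:ℝ) ≤ 2 * (k:ℝ) / L)
      calc (R + 3 * (Real.sqrt (2 * A / L) * T)) ^ 2
          = 2 * (k:ℝ) / L * (L / (2 * (k:ℝ)) *
            (R + 3 * (Real.sqrt (2 * A / L) * T)) ^ 2) := by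
            field_simp [hL.ne', hn0.ne']
        _ ≤ 2 * (k:ℝ) / L * ρ := h
        _ = 2 * k * ρ / L := by ring
    have h3 : R + 3 * (Real.sqrt (2 * A / L) * T) ≤ Real.sqrt (2 * k * ρ / L) := by
      have := Real.sqrt_le_sqrt h2
      rwa [Real.sqrt_sq (by positivity)] at this
    rw [hC k]
    calc T = Real.sqrt L / (3 * Real.sqrt (2 * A)) *
          (3 * (Real.sqrt (2 * A / L) * T)) := by
          rw [hsqAL]; field_simp
      _ ≤ Real.sqrt L / (3 * Real.sqrt (2 * A)) * (Real.sqrt (2 * k * ρ / L) - R) := by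
          apply mul_le_mul_of_nonneg_left (by linarith) (by positivity)
  -- basic facts about kstar
  have hn0 : (0:ℝ) < (kstar:ℝ) := by exact_mod_cast hk1
  have hCk : 0 < C kstar / kstar := div_pos hCpos hn0
  -- lstar ≥ 1
  have hlog1 : Real.log (C kstar / kstar) ≤ Real.log (1 - γ) / 2 := by
    have h1 : C kstar / kstar ≤ Real.sqrt (1 - γ) := by
      rw [div_le_iff₀ hn0]
      have := hCle kstar hk1
      linarith
    have := (Real.log_le_log_iff hCk (Real.sqrt_pos.mpr hb0)).mpr h1
    rwa [Real.log_sqrt hb0.le] at this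
  have hlstar1 : (1:ℝ) ≤ lstar := by
    rw [hlstar, le_div_iff_of_neg hlogb]
    linarith
  -- the value of (1-γ)^lstar
  have hbl : (1 - γ) ^ lstar = (C kstar / kstar) ^ 2 := by
    rw [hlstar, Real.rpow_def_of_pos hb0,
      show Real.log (1 - γ) * (2 * Real.log (C kstar / (kstar:ℝ)) / Real.log (1 - γ))
        = Real.log ((C kstar / (kstar:ℝ)) ^ 2) by
          rw [Real.log_pow]; push_cast; field_simp [hlogb'],
      Real.exp_log (by positivity)]
  -- the sum for (kstar, lstar)
  have hsum_star : (∑ _i ∈ Finset.Icc 1 kstar, lstar) = (kstar : ℝ) * lstar := by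
    rw [Finset.sum_const, Nat.card_Icc, Nat.add_sub_cancel, nsmul_eq_mul]
  constructor
  · -- feasibility of (kstar, lstar)
    rw [hfeas]
    refine ⟨hk1, fun i _ => hlstar1, ?_⟩
    have hterm' : Real.sqrt (2 * A * (1 - γ) ^ lstar / L)
        = Real.sqrt (2 * A / L) * (C kstar / kstar) := by
      rw [show 2 * A * (1 - γ) ^ lstar / L = 2 * A / L * (1 - γ) ^ lstar by ring,
        hbl, Real.sqrt_mul (by positivity), Real.sqrt_sq hCk.le]
    have hsum : (∑ i ∈ Finset.Icc 1 kstar,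
        Real.sqrt (2 * A * (1 - γ) ^ lstar / L))
        = Real.sqrt (2 * A / L) * C kstar := by
      rw [Finset.sum_const, Nat.card_Icc, Nat.add_sub_cancel, nsmul_eq_mul, hterm']
      field_simp
    rw [hsum]
    have h3C : 3 * (Real.sqrt (2 * A / L) * C kstar)
        = Real.sqrt (2 * kstar * ρ / L) - R := by
      rw [hsqAL, hC kstar]
      field_simp
    rw [h3C]
    have hsq : (Real.sqrt (2 * kstar * ρ / L)) ^ 2 = 2 * kstar * ρ / L :=
      Real.sq_sqrt (by positivity)
    rw [show R + (Real.sqrt (2 * ↑kstar * ρ / L) - R) = Real.sqrt (2 * ↑kstar * ρ / L) by ring,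
      hsq]
    have heq : L / (2 * (kstar:ℝ)) * (2 * (kstar:ℝ) * ρ / L) = ρ := by
      field_simp [hL.ne', hn0.ne']
    exact le_of_eq heq
  · -- optimality
    intro k l hfl
    rw [hfeas] at hfl
    obtain ⟨hk, hl1, hineq⟩ := hfl
    have hm0 : (0:ℝ) < (k:ℝ) := by exact_mod_cast hk
    have hTle : (∑ i ∈ Finset.Icc 1 k, (1 - γ) ^ (l i / 2)) ≤ C k := key k l hk hineq
    have hne : (Finset.Icc 1 k).Nonempty := ⟨1, by simp [hk]⟩
    have hT0 : 0 < ∑ i ∈ Finset.Icc 1 k, (1 - γ) ^ (l i / 2) :=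
      Finset.sum_pos (fun i _ => Real.rpow_pos_of_pos hb0 _) hne
    have hCk0 : 0 < C k := lt_of_lt_of_le hT0 hTle
    -- AM-GM
    have hcard : (Finset.Icc 1 k).card = k := by rw [Nat.card_Icc]; omega
    have hamgm : (1 - γ) ^ ((∑ i ∈ Finset.Icc 1 k, l i) / (2 * k))
        ≤ (∑ i ∈ Finset.Icc 1 k, (1 - γ) ^ (l i / 2)) / k := by
      have h := Real.geom_mean_le_arith_mean_weighted (Finset.Icc 1 k)
        (fun _ => 1 / (k:ℝ)) (fun i => (1 - γ) ^ (l i / 2))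
        (fun i _ => by positivity)
        (by rw [Finset.sum_const, hcard, nsmul_eq_mul]; field_simp)
        (fun i _ => (Real.rpow_pos_of_pos hb0 _).le)
      have hprod : (∏ i ∈ Finset.Icc 1 k, ((1 - γ) ^ (l i / 2)) ^ ((1:ℝ) / k))
          = (1 - γ) ^ ((∑ i ∈ Finset.Icc 1 k, l i) / (2 * k)) := by
        rw [show (∑ i ∈ Finset.Icc 1 k, l i) / (2 * (k:ℝ))
            = ∑ i ∈ Finset.Icc 1 k, (l i / 2 * (1 / k)) by
              rw [Finset.sum_div]
              exact Finset.sum_congr rfl fun i _ => by ring,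
          Real.rpow_sum_of_pos hb0]
        exact Finset.prod_congr rfl fun i _ => (Real.rpow_mul hb0.le _ _).symm
      rw [hprod] at h
      calc (1 - γ) ^ ((∑ i ∈ Finset.Icc 1 k, l i) / (2 * k))
          ≤ ∑ i ∈ Finset.Icc 1 k, 1 / (k:ℝ) * (1 - γ) ^ (l i / 2) := h
        _ = (∑ i ∈ Finset.Icc 1 k, (1 - γ) ^ (l i / 2)) / k := by
            rw [Finset.sum_div]
            exact Finset.sum_congr rfl fun i _ => by ring
    have hCkk : 0 < C k / k := div_pos hCk0 hm0
    have hchain : (1 - γ) ^ ((∑ i ∈ Finset.Icc 1 k, l i) / (2 * k)) ≤ C k / k :=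
      le_trans hamgm ((div_le_div_iff_of_pos_right hm0).mpr hTle)
    have hlog : (∑ i ∈ Finset.Icc 1 k, l i) / (2 * k) * Real.log (1 - γ)
        ≤ Real.log (C k / k) := by
      have := (Real.log_le_log_iff (Real.rpow_pos_of_pos hb0 _) hCkk).mpr hchain
      rwa [Real.log_rpow hb0] at this
    have hsuml : 2 * (k:ℝ) * Real.log (C k / k) / Real.log (1 - γ)
        ≤ ∑ i ∈ Finset.Icc 1 k, l i := by
      rw [div_le_iff_of_neg hlogb]
      have h1 := mul_le_mul_of_nonneg_left hlog (by positivity : (0:ℝ) ≤ 2 * (k:ℝ))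
      have e : 2 * (k:ℝ) * ((∑ i ∈ Finset.Icc 1 k, l i) / (2 * (k:ℝ)) * Real.log (1 - γ))
          = (∑ i ∈ Finset.Icc 1 k, l i) * Real.log (1 - γ) := by
        field_simp [hm0.ne']
      rw [e] at h1
      linarith
    have hφk : φ k ≤ Cin * (∑ i ∈ Finset.Icc 1 k, l i) + k * Cout := by
      rw [hφ k]
      have h1 := mul_le_mul_of_nonneg_left hsuml hCin.le
      have heq : Cin * (2 * (k:ℝ) * Real.log (C k / (k:ℝ)) / Real.log (1 - γ))
          = 2 * (k:ℝ) * Cin / Real.log (1 - γ) * Real.log (C k / (k:ℝ)) := by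
        field_simp [hlogb']
      rw [heq] at h1
      linarith
    have hφstar : Cin * (∑ _i ∈ Finset.Icc 1 kstar, lstar) + kstar * Cout = φ kstar := by
      rw [hsum_star, hφ kstar, hlstar]
      field_simp [hlogb']
    rw [hφstar]
    exact le_trans (hmin k hk hCk0) hφk
end

section
/- Fix reals L, A, ρ, C_in, C_out > 0, a real γ ∈ (0,1) and a real R > 0. Assume 3·√A < √(12·√(2·L·A·(1−γ))·R) and ρ < (√(12·√(2·L·A·(1−γ))·R) − 3·√A)². For an integer k ≥ 1 and a vector l = (l_1,…,l_k) with every l_i ∈ [1,∞), call the pair (k,l) feasible if (2L/(k+1)²)·(R + 3·Σ_{i=1}^k i·√(2A·(1−γ)^{l_i}/L))² ≤ ρ. For each integer k ≥ 1 with D(k) > 0, let n(k) be the unique integer in {1,…,k} with (n(k)−1)·(2k+2−n(k))·√(1−γ) ≤ 2·D(k) < n(k)·(2k+1−n(k))·√(1−γ), and define the vector l*(k) by l*(k)_i = 1 for 1 ≤ i ≤ n(k)−1 and l*(k)_i = ln( i·(k+1−n(k)) / (D(k) − n(k)(n(k)−1)·√(1−γ)/2) ) / ln(1/√(1−γ))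 for n(k) ≤ i ≤ k. Let k* ≥ 1 be an integer attaining the minimum of ψ(k) = k·C_out + C_in·Σ_{i=1}^k l*(k)_i over all integers k ≥ 1 with D(k) > 0. Then (k*, l*(k*)) is feasible and for every feasible pair (k, l) one has C_in·Σ_{i=1}^{k*} l*(k*)_i + k*·C_out ≤ C_in·Σ_{i=1}^{k} l_i + k·C_out. -/
open Real Finset

lemma aux_conv (a t l m : ℝ) (ha : 0 < a)
    (hcrit : 0 ≤ (l - m) * (1 - a * t * Real.exp (-(t * m)))) :
    m + a * Real.exp (-(t * m)) ≤ l + a * Real.exp (-(t * l)) := by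
  have h1 := Real.add_one_le_exp (-(t * (l - m)))
  have h2 : Real.exp (-(t * l)) = Real.exp (-(t * m)) * Real.exp (-(t * (l - m))) := by
    rw [← Real.exp_add]; ring_nf
  have h3 : Real.exp (-(t * m)) * (1 - t * (l - m)) ≤ Real.exp (-(t * l)) := by
    rw [h2]
    have hp := (Real.exp_pos (-(t * m))).le
    nlinarith [h1]
  nlinarith [mul_le_mul_of_nonneg_left h3 ha.le]

set_option maxHeartbeats 1000000 in
/-- Proposition 5 (accelerated outer scheme, linear inner rate): the computationally
optimal strategy uses inner iteration numbers equal to 1 up to index `n(k)-1` and then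
increasing with the index. -/
theorem stmt_3 (L A ρ Cin Cout γ R : ℝ)
    (hL : 0 < L) (hA : 0 < A) (hρ : 0 < ρ) (hCin : 0 < Cin) (hCout : 0 < Cout)
    (hγ0 : 0 < γ) (hγ1 : γ < 1) (hR : 0 < R)
    (hsq : 3 * Real.sqrt A < Real.sqrt (12 * Real.sqrt (2 * L * A * (1 - γ)) * R))
    (hthresh : ρ <
      (Real.sqrt (12 * Real.sqrt (2 * L * A * (1 - γ)) * R) - 3 * Real.sqrt A) ^ 2)
    (D : ℕ → ℝ)
    (hD : ∀ k : ℕ, D k = Real.sqrt L / (3 * Real.sqrt (2 * A)) *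
      (Real.sqrt (ρ / (2 * L)) * (k + 1) - R))
    (feasible : ℕ → (ℕ → ℝ) → Prop)
    (hfeas : ∀ (k : ℕ) (l : ℕ → ℝ), feasible k l ↔
      1 ≤ k ∧ (∀ i ∈ Finset.Icc 1 k, (1 : ℝ) ≤ l i) ∧
        2 * L / (k + 1) ^ 2 *
          (R + 3 * ∑ i ∈ Finset.Icc 1 k,
            (i : ℝ) * Real.sqrt (2 * A * (1 - γ) ^ (l i) / L)) ^ 2 ≤ ρ)
    (n : ℕ → ℕ)
    (hn : ∀ k : ℕ, 1 ≤ k → 0 < D k →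
      1 ≤ n k ∧ n k ≤ k ∧
        ((n k : ℝ) - 1) * (2 * (k : ℝ) + 2 - n k) * Real.sqrt (1 - γ) ≤ 2 * D k ∧
        2 * D k < (n k : ℝ) * (2 * (k : ℝ) + 1 - n k) * Real.sqrt (1 - γ))
    (lstar : ℕ → ℕ → ℝ)
    (hlstar1 : ∀ k i : ℕ, 1 ≤ i → i < n k → lstar k i = 1)
    (hlstar2 : ∀ k i : ℕ, n k ≤ i → i ≤ k → lstar k i =
      Real.log ((i : ℝ) * ((k : ℝ) + 1 - n k) /
          (D k - (n k : ℝ) * ((n k : ℝ) - 1) * Real.sqrt (1 - γ) / 2)) /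
        Real.log (1 / Real.sqrt (1 - γ)))
    (ψ : ℕ → ℝ)
    (hψ : ∀ k : ℕ, ψ k = k * Cout + Cin * ∑ i ∈ Finset.Icc 1 k, lstar k i)
    (kstar : ℕ) (hk1 : 1 ≤ kstar) (hDpos : 0 < D kstar)
    (hmin : ∀ k : ℕ, 1 ≤ k → 0 < D k → ψ kstar ≤ ψ k) :
    feasible kstar (lstar kstar) ∧
      ∀ (k : ℕ) (l : ℕ → ℝ), feasible k l →
        Cin * (∑ i ∈ Finset.Icc 1 kstar, lstar kstar i) + kstar * Cout ≤
          Cin * (∑ i ∈ Finset.Icc 1 k, l i) + k * Cout := by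
  clear hsq hthresh
  have hγ' : (0:ℝ) < 1 - γ := by linarith
  set s : ℝ := Real.sqrt (1 - γ) with hs_def
  have hs0 : 0 < s := Real.sqrt_pos.2 hγ'
  have hs1 : s < 1 := by
    rw [hs_def]
    exact (Real.sqrt_lt' one_pos).mpr (by nlinarith)
  set t : ℝ := -Real.log s with ht_def
  have ht : 0 < t := by
    have := Real.log_neg hs0 hs1
    rw [ht_def]; linarith
  have hlogs : Real.log s = -t := by rw [ht_def]; ring
  have hlog1s : Real.log (1 / s) = t := by rw [one_div, Real.log_inv, hlogs]; ring
  have hexp : ∀ x : ℝ, s ^ x = Real.exp (-(t * x)) := by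
    intro x
    rw [Real.rpow_def_of_pos hs0, hlogs]
    ring_nf
  -- sqrt((1-γ)^x) = s^x
  have hsqrtpow : ∀ x : ℝ, Real.sqrt ((1 - γ) ^ x) = s ^ x := by
    intro x
    rw [Real.sqrt_eq_rpow, ← Real.rpow_mul hγ'.le, hs_def, Real.sqrt_eq_rpow,
      ← Real.rpow_mul hγ'.le]
    congr 1; ring
  have hterm : ∀ x : ℝ, Real.sqrt (2 * A * (1 - γ) ^ x / L)
      = Real.sqrt (2 * A / L) * s ^ x := by
    intro x
    rw [show 2 * A * (1 - γ) ^ x / L = (2 * A / L) * (1 - γ) ^ x by ring,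
      Real.sqrt_mul (by positivity), hsqrtpow]
  have hsL : 0 < Real.sqrt L := Real.sqrt_pos.2 hL
  have hs2A : 0 < Real.sqrt (2 * A) := Real.sqrt_pos.2 (by positivity)
  have hW0 : 0 < Real.sqrt (ρ / (2 * L)) := Real.sqrt_pos.2 (by positivity)
  have hW2 : Real.sqrt (ρ / (2 * L)) ^ 2 = ρ / (2 * L) := Real.sq_sqrt (by positivity)
  have hρW : ρ = 2 * L * Real.sqrt (ρ / (2 * L)) ^ 2 := by
    rw [hW2]; field_simp
  have hsqrtQ : Real.sqrt (2 * A / L) = Real.sqrt (2 * A) / Real.sqrt L :=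
    Real.sqrt_div (by positivity) L
  -- Lemma A: the constraint is equivalent to  Σ i s^{l_i} ≤ D k
  have lemA : ∀ (k : ℕ) (l : ℕ → ℝ),
      (2 * L / ((k : ℝ) + 1) ^ 2 *
        (R + 3 * ∑ i ∈ Finset.Icc 1 k,
          (i : ℝ) * Real.sqrt (2 * A * (1 - γ) ^ (l i) / L)) ^ 2 ≤ ρ)
      ↔ (∑ i ∈ Finset.Icc 1 k, (i : ℝ) * s ^ (l i) ≤ D k) := by
    intro k l
    have hrw : ∑ i ∈ Finset.Icc 1 k, (i : ℝ) * Real.sqrt (2 * A * (1 - γ) ^ (l i) / L)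
        = (Real.sqrt (2 * A) / Real.sqrt L) * ∑ i ∈ Finset.Icc 1 k, (i : ℝ) * s ^ (l i) := by
      rw [Finset.mul_sum]
      refine Finset.sum_congr rfl fun i _ => ?_
      rw [hterm, hsqrtQ]; ring
    rw [hrw]
    set T := ∑ i ∈ Finset.Icc 1 k, (i : ℝ) * s ^ (l i) with hT
    have hT0 : 0 ≤ T :=
      Finset.sum_nonneg fun i _ =>
        mul_nonneg (Nat.cast_nonneg i) (Real.rpow_pos_of_pos hs0 _).le
    have hk10 : (0:ℝ) < (k : ℝ) + 1 := by positivity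
    set W := Real.sqrt (ρ / (2 * L)) with hW
    have hDkeq : D k = (W * ((k:ℝ) + 1) - R) * (Real.sqrt L / (3 * Real.sqrt (2 * A))) := by
      rw [hD]; ring
    have hP0 : 0 ≤ R + 3 * (Real.sqrt (2 * A) / Real.sqrt L * T) := by positivity
    have hkey : (R + 3 * (Real.sqrt (2 * A) / Real.sqrt L * T) ≤ W * ((k:ℝ) + 1))
        ↔ T ≤ D k := by
      rw [hDkeq,
        show (W * ((k:ℝ) + 1) - R) * (Real.sqrt L / (3 * Real.sqrt (2 * A)))
          = (W * ((k:ℝ) + 1) - R) * Real.sqrt L / (3 * Real.sqrt (2 * A)) from by ring,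
        le_div_iff₀ (by positivity : (0:ℝ) < 3 * Real.sqrt (2 * A))]
      constructor
      · intro h
        have h2 := mul_le_mul_of_nonneg_right
          (show 3 * (Real.sqrt (2 * A) / Real.sqrt L * T) ≤ W * ((k:ℝ) + 1) - R from by
            linarith) hsL.le
        calc T * (3 * Real.sqrt (2 * A))
            = 3 * (Real.sqrt (2 * A) / Real.sqrt L * T) * Real.sqrt L := by
              field_simp
          _ ≤ (W * ((k:ℝ) + 1) - R) * Real.sqrt L := h2
      · intro h
        have h3 : 3 * (Real.sqrt (2 * A) / Real.sqrt L * T) ≤ W * ((k:ℝ) + 1) - R := by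
          rw [show 3 * (Real.sqrt (2 * A) / Real.sqrt L * T)
              = T * (3 * Real.sqrt (2 * A)) / Real.sqrt L from by field_simp,
            div_le_iff₀ hsL]
          exact h
        linarith
    constructor
    · intro h
      apply hkey.mp
      rw [div_mul_eq_mul_div, div_le_iff₀ (by positivity)] at h
      have hPQ : (R + 3 * (Real.sqrt (2 * A) / Real.sqrt L * T)) ^ 2
          ≤ (W * ((k:ℝ) + 1)) ^ 2 := by nlinarith [h, hρW, hL]
      nlinarith [hPQ, hP0, mul_nonneg hW0.le hk10.le]
    · intro h
      have hP := hkey.mpr h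
      have hPQ : (R + 3 * (Real.sqrt (2 * A) / Real.sqrt L * T)) ^ 2
          ≤ (W * ((k:ℝ) + 1)) ^ 2 := pow_le_pow_left₀ hP0 hP 2
      rw [div_mul_eq_mul_div, div_le_iff₀ (by positivity)]
      nlinarith [hPQ, hL]
  -- Gauss sum
  have hgaussR : ∀ N : ℕ, ∑ i ∈ Finset.range N, (i : ℝ) = (N : ℝ) * ((N : ℝ) - 1) / 2 := by
    intro N
    induction N with
    | zero => simp
    | succ p ih => rw [Finset.sum_range_succ, ih]; push_cast; ring
  -- Master lemma: properties of lstar for any admissible k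
  have master : ∀ k : ℕ, 1 ≤ k → 0 < D k →
      (∀ i ∈ Finset.Icc 1 k, (1:ℝ) ≤ lstar k i) ∧
      (∑ i ∈ Finset.Icc 1 k, (i : ℝ) * s ^ (lstar k i) = D k) ∧
      (∀ lv : ℕ → ℝ, (∀ i ∈ Finset.Icc 1 k, (1:ℝ) ≤ lv i) →
        (∑ i ∈ Finset.Icc 1 k, (i : ℝ) * s ^ (lv i) ≤ D k) →
        ∑ i ∈ Finset.Icc 1 k, lstar k i ≤ ∑ i ∈ Finset.Icc 1 k, lv i) := by
    intro k hk hDk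
    obtain ⟨hn1, hnk, hlo, hhi⟩ := hn k hk hDk
    have hnR : (1:ℝ) ≤ (n k : ℝ) := by exact_mod_cast hn1
    have hnkR : (n k : ℝ) ≤ (k : ℝ) := by exact_mod_cast hnk
    have hm : (0:ℝ) < (k : ℝ) + 1 - n k := by linarith
    have hc' : 0 < D k - (n k : ℝ) * ((n k : ℝ) - 1) * s / 2 := by
      rcases eq_or_lt_of_le hn1 with h1 | h2
      · rw [← h1]; push_cast; linarith
      · have h2R : (2:ℝ) ≤ (n k : ℝ) := by exact_mod_cast h2
        nlinarith [hlo, mul_pos (mul_pos (show (0:ℝ) < (n k : ℝ) - 1 by linarith) hs0) hm]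
    set c : ℝ := (D k - (n k : ℝ) * ((n k : ℝ) - 1) * s / 2) / ((k : ℝ) + 1 - n k)
      with hc_def
    have hc : 0 < c := div_pos hc' hm
    have hclt : c < (n k : ℝ) * s := by
      rw [hc_def, div_lt_iff₀ hm]
      nlinarith [hhi]
    have hcle : ((n k : ℝ) - 1) * s ≤ c := by
      rw [hc_def, le_div_iff₀ hm]
      nlinarith [hlo]
    have hsval : ∀ i : ℕ, n k ≤ i → i ≤ k → s ^ (lstar k i) = c / i := by
      intro i hni hik
      have hi1 : 1 ≤ i := le_trans hn1 hni
      have hiR : (0:ℝ) < (i : ℝ) := by exact_mod_cast hi1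
      have harg : 0 < (i : ℝ) * ((k : ℝ) + 1 - n k) /
          (D k - (n k : ℝ) * ((n k : ℝ) - 1) * s / 2) := by positivity
      rw [hlstar2 k i hni hik, hexp, hlog1s,
        show -(t * (Real.log ((i : ℝ) * ((k : ℝ) + 1 - n k) /
            (D k - (n k : ℝ) * ((n k : ℝ) - 1) * s / 2)) / t))
          = -Real.log ((i : ℝ) * ((k : ℝ) + 1 - n k) /
            (D k - (n k : ℝ) * ((n k : ℝ) - 1) * s / 2)) from by field_simp,
        Real.exp_neg, Real.exp_log harg, hc_def]
      field_simp
    have hge1 : ∀ i ∈ Finset.Icc 1 k, (1:ℝ) ≤ lstar k i := by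
      intro i hi
      rw [Finset.mem_Icc] at hi
      rcases Nat.lt_or_ge i (n k) with hlt | hge
      · rw [hlstar1 k i hi.1 hlt]
      · have hiR : (0:ℝ) < (i : ℝ) := by
          exact_mod_cast lt_of_lt_of_le Nat.zero_lt_one hi.1
        have hniR : (n k : ℝ) ≤ (i : ℝ) := by exact_mod_cast hge
        have hcs : c / i ≤ s := by
          rw [div_le_iff₀ hiR]
          nlinarith [mul_le_mul_of_nonneg_right hniR hs0.le]
        have : s ^ (lstar k i) ≤ s ^ (1:ℝ) := by
          rw [hsval i hge hi.2, Real.rpow_one]; exact hcs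
        exact (Real.rpow_le_rpow_left_iff_of_base_lt_one hs0 hs1).mp this
    have hIco1 : ∑ i ∈ Finset.Ico 1 (n k), (i : ℝ) * s ^ (lstar k i)
        = ((n k : ℝ) * ((n k : ℝ) - 1) / 2) * s := by
      have e1 : ∑ i ∈ Finset.Ico 1 (n k), (i : ℝ) * s ^ (lstar k i)
          = (∑ i ∈ Finset.Ico 1 (n k), (i : ℝ)) * s := by
        rw [Finset.sum_mul]
        refine Finset.sum_congr rfl fun i hi => ?_
        rw [Finset.mem_Ico] at hi
        rw [hlstar1 k i hi.1 hi.2, Real.rpow_one]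
      have e2 : ∑ i ∈ Finset.Ico 1 (n k), (i : ℝ) = ∑ i ∈ Finset.range (n k), (i : ℝ) := by
        rw [Finset.range_eq_Ico, ← Finset.sum_Ico_consecutive _ (Nat.zero_le 1) hn1]
        simp
      rw [e1, e2, hgaussR]
    have hIco2 : ∑ i ∈ Finset.Ico (n k) (k + 1), (i : ℝ) * s ^ (lstar k i)
        = ((k : ℝ) + 1 - n k) * c := by
      have e1 : ∑ i ∈ Finset.Ico (n k) (k + 1), (i : ℝ) * s ^ (lstar k i)
          = ∑ _i ∈ Finset.Ico (n k) (k + 1), c := by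
        refine Finset.sum_congr rfl fun i hi => ?_
        rw [Finset.mem_Ico] at hi
        have hi0 : (i : ℝ) ≠ 0 := by
          have : 1 ≤ i := le_trans hn1 hi.1
          positivity
        rw [hsval i hi.1 (by omega)]
        field_simp
      rw [e1, Finset.sum_const, Nat.card_Ico, nsmul_eq_mul,
        Nat.cast_sub (by omega : n k ≤ k + 1)]
      push_cast; ring
    have hsum : ∑ i ∈ Finset.Icc 1 k, (i : ℝ) * s ^ (lstar k i) = D k := by
      rw [← Finset.Ico_add_one_right_eq_Icc,
        ← Finset.sum_Ico_consecutive _ hn1 (by omega : n k ≤ k + 1), hIco1, hIco2,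
        hc_def]
      field_simp
      ring
    refine ⟨hge1, hsum, ?_⟩
    intro lv hlv hlvD
    set μ : ℝ := 1 / (c * t) with hμ_def
    have hμ : 0 < μ := by rw [hμ_def]; positivity
    have point : ∀ i ∈ Finset.Icc 1 k,
        lstar k i + μ * i * s ^ (lstar k i) ≤ lv i + μ * i * s ^ (lv i) := by
      intro i hi
      have hi' := hi
      rw [Finset.mem_Icc] at hi'
      have hiR : (0:ℝ) < (i : ℝ) := by
        exact_mod_cast lt_of_lt_of_le Nat.zero_lt_one hi'.1
      have ha : 0 < μ * (i : ℝ) := mul_pos hμ hiR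
      rcases Nat.lt_or_ge i (n k) with hlt | hge
      · -- i < n k : lstar = 1
        have hin : (i : ℝ) ≤ (n k : ℝ) - 1 := by
          have : (i : ℝ) + 1 ≤ (n k : ℝ) := by exact_mod_cast hlt
          linarith
        have hes : Real.exp (-(t * 1)) = s := by
          rw [← hexp 1, Real.rpow_one]
        have hfac : μ * (i : ℝ) * t * Real.exp (-(t * 1)) ≤ 1 := by
          rw [hes, hμ_def]
          rw [show 1 / (c * t) * (i : ℝ) * t * s = (i : ℝ) * s / c from by
            field_simp, div_le_one hc]
          nlinarith [mul_le_mul_of_nonneg_right hin hs0.le]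
        have hcrit : 0 ≤ (lv i - 1) * (1 - μ * (i : ℝ) * t * Real.exp (-(t * 1))) :=
          mul_nonneg (by linarith [hlv i hi]) (by linarith)
        have := aux_conv (μ * (i : ℝ)) t (lv i) 1 ha hcrit
        rw [hlstar1 k i hi'.1 hlt, hexp (lv i), hexp 1]
        linarith
      · -- n k ≤ i
        have hfac : μ * (i : ℝ) * t * Real.exp (-(t * lstar k i)) = 1 := by
          rw [← hexp, hsval i hge hi'.2, hμ_def]
          field_simp
        have hcrit : 0 ≤ (lv i - lstar k i) *
            (1 - μ * (i : ℝ) * t * Real.exp (-(t * lstar k i))) := by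
          rw [hfac]; simp
        have := aux_conv (μ * (i : ℝ)) t (lv i) (lstar k i) ha hcrit
        rw [hexp (lv i), hexp (lstar k i)]
        linarith
    have hsum_le := Finset.sum_le_sum point
    rw [Finset.sum_add_distrib, Finset.sum_add_distrib] at hsum_le
    have e1 : ∑ i ∈ Finset.Icc 1 k, μ * i * s ^ (lstar k i) = μ * D k := by
      rw [← hsum, Finset.mul_sum]
      exact Finset.sum_congr rfl fun i _ => by ring
    have e2 : ∑ i ∈ Finset.Icc 1 k, μ * i * s ^ (lv i)
        = μ * ∑ i ∈ Finset.Icc 1 k, (i : ℝ) * s ^ (lv i) := by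
      rw [Finset.mul_sum]
      exact Finset.sum_congr rfl fun i _ => by ring
    have e3 : μ * ∑ i ∈ Finset.Icc 1 k, (i : ℝ) * s ^ (lv i) ≤ μ * D k :=
      mul_le_mul_of_nonneg_left hlvD hμ.le
    rw [e1, e2] at hsum_le
    linarith
  -- conclude
  obtain ⟨hge1s, hsums, _⟩ := master kstar hk1 hDpos
  constructor
  · rw [hfeas]
    exact ⟨hk1, hge1s, (lemA kstar (lstar kstar)).mpr (le_of_eq hsums)⟩
  · intro k l hfl
    rw [hfeas] at hfl
    obtain ⟨hk, hl1, hcon⟩ := hfl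
    have hTle := (lemA k l).mp hcon
    have hDk : 0 < D k := by
      have h1k : (1:ℕ) ∈ Finset.Icc 1 k := Finset.mem_Icc.2 ⟨le_refl _, hk⟩
      have hpos : (0:ℝ) < ∑ i ∈ Finset.Icc 1 k, (i : ℝ) * s ^ (l i) := by
        refine Finset.sum_pos' (fun i _ =>
          mul_nonneg (Nat.cast_nonneg i) (Real.rpow_pos_of_pos hs0 _).le) ⟨1, h1k, ?_⟩
        simpa using Real.rpow_pos_of_pos hs0 (l 1)
      linarith
    obtain ⟨_, _, hopt⟩ := master k hk hDk
    have h3 := hopt l hl1 hTle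
    have h4 := hmin k hk hDk
    rw [hψ, hψ] at h4
    have h5 := mul_le_mul_of_nonneg_left h3 hCin.le
    linarith only [h4, h5]
end

section
/- Let k ≥ 1 be an integer, γ ∈ (0,1) a real, and D a real with 0 < D < k(k+1)·√(1−γ)/2. Let n be the unique integer in {1,…,k} with (n−1)(2k+2−n)·√(1−γ) ≤ 2D < n(2k+1−n)·√(1−γ). Define l*_i = 1 for 1 ≤ i ≤ n−1 and l*_i = ln( i·(k+1−n) / (D − n(n−1)·√(1−γ)/2) ) / ln(1/√(1−γ)) for n ≤ i ≤ k. Then every l*_i ≥ 1, Σ_{i=1}^k i·(1−γ)^(l*_i/2) = D, and for every vector l = (l_1,…,l_k) with each l_i ∈ [1,∞) and Σ_{i=1}^k i·(1−γ)^(l_i/2) ≤ D, one has Σ_{i=1}^k l_i ≥ Σ_{i=1}^k l*_i. -/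
open Real Finset

private lemma gauss_sum_real (m : ℕ) :
    ∑ i ∈ Finset.Icc 1 m, (i : ℝ) = m * (m + 1) / 2 := by
  induction m with
  | zero => simp
  | succ m ih =>
    rw [Finset.sum_Icc_succ_top (by omega)]
    push_cast
    rw [ih]; ring

private lemma icc_split (a b : ℕ) (h1 : 1 ≤ b) (h2 : b ≤ a + 1) (f : ℕ → ℝ) :
    ∑ i ∈ Finset.Icc 1 a, f i
      = ∑ i ∈ Finset.Icc 1 (b-1), f i + ∑ i ∈ Finset.Icc b a, f i := by
  rw [← Finset.Ico_add_one_right_eq_Icc, ← Finset.Ico_add_one_right_eq_Icc, ← Finset.Ico_add_one_right_eq_Icc,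
    ← Finset.sum_Ico_consecutive _ (by omega : 1 ≤ b) (by omega : b ≤ a + 1)]
  congr 2

set_option maxHeartbeats 2000000 in
/-- Inner optimisation step of Proposition 5: with weighted constraint
`∑ i·(1-γ)^(lᵢ/2) ≤ D`, the total `∑ lᵢ` is minimized by a vector whose entries
equal 1 up to index `n-1` and then increase with the index. -/
theorem stmt_7 (k : ℕ) (hk : 1 ≤ k) (γ D : ℝ) (hγ0 : 0 < γ) (hγ1 : γ < 1)
    (hD0 : 0 < D) (hDk : D < k * (k + 1) * Real.sqrt (1 - γ) / 2)
    (n : ℕ) (hn1 : 1 ≤ n) (hnk : n ≤ k)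
    (hnlow : ((n : ℝ) - 1) * (2 * (k : ℝ) + 2 - n) * Real.sqrt (1 - γ) ≤ 2 * D)
    (hnhigh : 2 * D < (n : ℝ) * (2 * (k : ℝ) + 1 - n) * Real.sqrt (1 - γ))
    (lstar : ℕ → ℝ)
    (hlstar1 : ∀ i : ℕ, 1 ≤ i → i < n → lstar i = 1)
    (hlstar2 : ∀ i : ℕ, n ≤ i → i ≤ k → lstar i =
      Real.log ((i : ℝ) * ((k : ℝ) + 1 - n) /
          (D - (n : ℝ) * ((n : ℝ) - 1) * Real.sqrt (1 - γ) / 2)) /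
        Real.log (1 / Real.sqrt (1 - γ))) :
    (∀ i ∈ Finset.Icc 1 k, (1 : ℝ) ≤ lstar i) ∧
      (∑ i ∈ Finset.Icc 1 k, (i : ℝ) * (1 - γ) ^ (lstar i / 2)) = D ∧
      ∀ l : ℕ → ℝ, (∀ i ∈ Finset.Icc 1 k, (1 : ℝ) ≤ l i) →
        (∑ i ∈ Finset.Icc 1 k, (i : ℝ) * (1 - γ) ^ (l i / 2)) ≤ D →
        (∑ i ∈ Finset.Icc 1 k, lstar i) ≤ ∑ i ∈ Finset.Icc 1 k, l i := by
  have h1γ : (0:ℝ) < 1 - γ := by linarith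
  set q := Real.sqrt (1 - γ) with hqdef
  clear_value q
  have hq0 : 0 < q := by rw [hqdef]; exact Real.sqrt_pos.mpr h1γ
  have hq1 : q < 1 := by
    nlinarith [Real.sq_sqrt h1γ.le, Real.sqrt_nonneg (1 - γ)]
  have hlogq : Real.log q < 0 := Real.log_neg hq0 hq1
  set c : ℝ := -Real.log q with hcdef
  clear_value c
  have hc0 : 0 < c := by rw [hcdef]; exact neg_pos.mpr hlogq
  have hN1 : (1:ℝ) ≤ (n:ℝ) := by exact_mod_cast hn1
  have hNK : (n:ℝ) ≤ (k:ℝ) := by exact_mod_cast hnk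
  have hM : (1:ℝ) ≤ (k:ℝ) + 1 - n := by linarith
  have hMne : ((k:ℝ) + 1 - n) ≠ 0 := by linarith
  set E : ℝ := D - (n:ℝ) * ((n:ℝ) - 1) * q / 2 with hEdef
  clear_value E
  have hE : 0 < E := by
    rcases eq_or_lt_of_le hN1 with h | h
    · rw [hEdef, ← h]; simpa using hD0
    · have h2 : (0:ℝ) < ((n:ℝ) - 1) * (2*(k:ℝ) + 2 - 2*n) * q := by
        apply mul_pos (mul_pos (by linarith) (by linarith)) hq0
      rw [hEdef]; nlinarith [hnlow]
  -- rewrite rpow with base 1-γ in terms of base q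
  have hpow : ∀ x : ℝ, (1 - γ) ^ (x / 2) = q ^ x := by
    intro x
    rw [show x / 2 = (1/2) * x by ring, Real.rpow_mul h1γ.le, hqdef,
      ← Real.sqrt_eq_rpow]
  have hlog1q : Real.log (1/q) = c := by
    rw [one_div, Real.log_inv, hcdef]
  -- value of q ^ lstar i for i ≥ n
  have hA : ∀ i : ℕ, n ≤ i → i ≤ k → q ^ (lstar i) = E / ((i:ℝ) * ((k:ℝ) + 1 - n)) := by
    intro i hni hik
    have hi0 : (0:ℝ) < (i:ℝ) := by
      have : (n:ℝ) ≤ (i:ℝ) := by exact_mod_cast hni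
      linarith
    have hApos : (0:ℝ) < (i:ℝ) * ((k:ℝ) + 1 - n) / E := by positivity
    have hls : Real.log q * lstar i = -Real.log ((i:ℝ) * ((k:ℝ) + 1 - n) / E) := by
      rw [hlstar2 i hni hik, hlog1q, hcdef]
      field_simp [hlogq.ne]
    rw [Real.rpow_def_of_pos hq0, hls, Real.exp_neg, Real.exp_log hApos]
    rw [inv_div]
  -- every lstar i is at least 1
  have hB : ∀ i ∈ Finset.Icc 1 k, (1:ℝ) ≤ lstar i := by
    intro i hi
    rw [Finset.mem_Icc] at hi
    rcases lt_or_ge i n with h | h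
    · rw [hlstar1 i hi.1 h]
    · have hi0 : (n:ℝ) ≤ (i:ℝ) := by exact_mod_cast h
      have key : q ^ (lstar i) ≤ q ^ (1:ℝ) := by
        rw [hA i h hi.2, Real.rpow_one]
        rw [div_le_iff₀ (by nlinarith)]
        rw [hEdef]
        nlinarith [hnhigh, hq0]
      exact (Real.rpow_le_rpow_left_iff_of_base_lt_one hq0 hq1).mp key
  -- the constraint holds with equality at lstar
  have hstareq : ∑ i ∈ Finset.Icc 1 k, (i:ℝ) * q ^ (lstar i) = D := by
    rw [icc_split k n hn1 (by omega) (fun i => (i:ℝ) * q ^ (lstar i))]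
    have h1 : ∑ i ∈ Finset.Icc 1 (n-1), (i:ℝ) * q ^ (lstar i)
        = (n:ℝ) * ((n:ℝ) - 1) * q / 2 := by
      have e1 : ∑ i ∈ Finset.Icc 1 (n-1), (i:ℝ) * q ^ (lstar i)
          = ∑ i ∈ Finset.Icc 1 (n-1), (i:ℝ) * q := by
        apply Finset.sum_congr rfl
        intro i hi
        rw [Finset.mem_Icc] at hi
        rw [hlstar1 i hi.1 (by omega), Real.rpow_one]
      rw [e1, ← Finset.sum_mul, gauss_sum_real]
      have e2 : ((n - 1 : ℕ) : ℝ) = (n:ℝ) - 1 := by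
        push_cast [Nat.cast_sub hn1]; ring
      rw [e2]; ring
    have h2 : ∑ i ∈ Finset.Icc n k, (i:ℝ) * q ^ (lstar i) = E := by
      have e1 : ∑ i ∈ Finset.Icc n k, (i:ℝ) * q ^ (lstar i)
          = ∑ _i ∈ Finset.Icc n k, E / ((k:ℝ) + 1 - n) := by
        apply Finset.sum_congr rfl
        intro i hi
        rw [Finset.mem_Icc] at hi
        have hi0 : (0:ℝ) < (i:ℝ) := by
          have : (n:ℝ) ≤ (i:ℝ) := by exact_mod_cast hi.1
          linarith
        rw [hA i hi.1 hi.2]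
        field_simp
      rw [e1, Finset.sum_const, Nat.card_Icc, nsmul_eq_mul]
      have e2 : ((k + 1 - n : ℕ) : ℝ) = (k:ℝ) + 1 - n := by
        push_cast [Nat.cast_sub (by omega : n ≤ k + 1)]; ring
      rw [e2]
      field_simp
    rw [h1, h2, hEdef]
    ring
  refine ⟨hB, ?_, ?_⟩
  · simp only [hpow]
    exact hstareq
  -- optimality
  · intro l hl1 hlD
    simp only [hpow] at hlD
    set lam : ℝ := ((k:ℝ) + 1 - n) / (c * E) with hlamdef
    clear_value lam
    have hlam0 : 0 < lam := by
      rw [hlamdef]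
      have : 0 < c * E := mul_pos hc0 hE
      positivity
    -- convexity tangent inequality
    have hconv : ∀ x y : ℝ, q ^ x * (1 - c * (y - x)) ≤ q ^ y := by
      intro x y
      have h1 : 1 + Real.log q * (y - x) ≤ Real.exp (Real.log q * (y - x)) := by
        linarith [Real.add_one_le_exp (Real.log q * (y - x))]
      have h2 : q ^ (y - x) = Real.exp (Real.log q * (y - x)) :=
        Real.rpow_def_of_pos hq0 _
      have h3 : q ^ x * (1 + Real.log q * (y - x)) ≤ q ^ x * q ^ (y - x) := by
        apply mul_le_mul_of_nonneg_left _ (Real.rpow_nonneg hq0.le x)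
        rw [h2]; exact h1
      rw [← Real.rpow_add hq0] at h3
      rw [show x + (y - x) = y by ring] at h3
      calc q ^ x * (1 - c * (y - x)) = q ^ x * (1 + Real.log q * (y - x)) := by
            rw [hcdef]; ring
        _ ≤ q ^ y := h3
    -- per-index inequality
    have key : ∀ i ∈ Finset.Icc 1 k,
        lam * ((i:ℝ) * q ^ (lstar i) - (i:ℝ) * q ^ (l i)) ≤ l i - lstar i := by
      intro i hi
      have hi' := hi
      rw [Finset.mem_Icc] at hi
      have hi0 : (0:ℝ) < (i:ℝ) := by
        have : (1:ℝ) ≤ (i:ℝ) := by exact_mod_cast hi.1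
        linarith
      have hconvi := hconv (lstar i) (l i)
      rcases lt_or_ge i n with h | h
      · -- case i < n
        have hls : lstar i = 1 := hlstar1 i hi.1 h
        have hiN : (i:ℝ) ≤ (n:ℝ) - 1 := by
          have : (i:ℝ) + 1 ≤ (n:ℝ) := by exact_mod_cast h
          linarith
        have hsmall : lam * (i:ℝ) * (c * q) ≤ 1 := by
          rw [hlamdef, div_mul_eq_mul_div, div_mul_eq_mul_div,
            div_le_one (by positivity)]
          have hEge : ((k:ℝ) + 1 - n) * (i:ℝ) * q ≤ E := by
            have step : ((k:ℝ) + 1 - n) * (i:ℝ) * q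
                ≤ ((k:ℝ) + 1 - n) * ((n:ℝ) - 1) * q := by
              apply mul_le_mul_of_nonneg_right _ hq0.le
              exact mul_le_mul_of_nonneg_left hiN (by linarith)
            rw [hEdef]
            nlinarith [hnlow]
          calc ((k:ℝ) + 1 - n) * (i:ℝ) * (c * q)
              = c * (((k:ℝ) + 1 - n) * (i:ℝ) * q) := by ring
            _ ≤ c * E := mul_le_mul_of_nonneg_left hEge hc0.le
        rw [hls] at hconvi ⊢
        rw [Real.rpow_one] at hconvi ⊢
        have hl1i : (1:ℝ) ≤ l i := hl1 i hi'
        have step1 : q - q ^ (l i) ≤ c * q * (l i - 1) := by nlinarith [hconvi]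
        have step2 : lam * (i:ℝ) * (q - q ^ (l i)) ≤ lam * (i:ℝ) * (c * q * (l i - 1)) :=
          mul_le_mul_of_nonneg_left step1 (by positivity)
        have step3 : lam * (i:ℝ) * (c * q * (l i - 1)) ≤ l i - 1 := by
          have h4 := mul_le_mul_of_nonneg_right hsmall (by linarith : (0:ℝ) ≤ l i - 1)
          calc lam * (i:ℝ) * (c * q * (l i - 1))
              = lam * (i:ℝ) * (c * q) * (l i - 1) := by ring
            _ ≤ 1 * (l i - 1) := h4
            _ = l i - 1 := by ring
        calc lam * ((i:ℝ) * q - (i:ℝ) * q ^ (l i))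
            = lam * (i:ℝ) * (q - q ^ (l i)) := by ring
          _ ≤ l i - 1 := le_trans step2 step3
      · -- case i ≥ n
        have hAi := hA i h hi.2
        have hprod : lam * (i:ℝ) * (c * q ^ (lstar i)) = 1 := by
          rw [hAi, hlamdef]
          field_simp
        have step1 : q ^ (lstar i) - q ^ (l i)
            ≤ c * q ^ (lstar i) * (l i - lstar i) := by
          nlinarith [hconvi]
        have step2 : lam * (i:ℝ) * (q ^ (lstar i) - q ^ (l i))
            ≤ lam * (i:ℝ) * (c * q ^ (lstar i) * (l i - lstar i)) :=
          mul_le_mul_of_nonneg_left step1 (by positivity)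
        have step3 : lam * (i:ℝ) * (c * q ^ (lstar i) * (l i - lstar i))
            = l i - lstar i := by
          calc lam * (i:ℝ) * (c * q ^ (lstar i) * (l i - lstar i))
              = lam * (i:ℝ) * (c * q ^ (lstar i)) * (l i - lstar i) := by ring
            _ = 1 * (l i - lstar i) := by rw [hprod]
            _ = l i - lstar i := by ring
        calc lam * ((i:ℝ) * q ^ (lstar i) - (i:ℝ) * q ^ (l i))
            = lam * (i:ℝ) * (q ^ (lstar i) - q ^ (l i)) := by ring
          _ ≤ l i - lstar i := by rw [← step3]; exact step2
    have hsum := Finset.sum_le_sum key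
    rw [Finset.sum_sub_distrib] at hsum
    have hlhs : ∑ i ∈ Finset.Icc 1 k,
        lam * ((i:ℝ) * q ^ (lstar i) - (i:ℝ) * q ^ (l i))
        = lam * (D - ∑ i ∈ Finset.Icc 1 k, (i:ℝ) * q ^ (l i)) := by
      rw [← Finset.mul_sum, Finset.sum_sub_distrib, hstareq]
    rw [hlhs] at hsum
    have hnn : 0 ≤ lam * (D - ∑ i ∈ Finset.Icc 1 k, (i:ℝ) * q ^ (l i)) := by
      apply mul_nonneg hlam0.le
      linarith
    linarith
end

section
/- Let L, A > 0, γ ∈ (0,1) and R > 0 be reals with 3·√A < √(12·√(2·L·A·(1−γ))·R), and let ρ be a real with 0 < ρ < (√(12·√(2·L·A·(1−γ))·R) − 3·√A)². Then for every real k > 0, (√L/(3·√(2A)))·(√(ρ/(2L))·(k+1) − R) < k(k+1)·√(1−γ)/2. -/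
open Real

/-- Case 1 of the proof of Proposition 5: below the accuracy threshold of
Proposition 5 one always has `D(k) < k(k+1)√(1-γ)/2`. -/
theorem stmt_17 (L A γ R ρ : ℝ) (hL : 0 < L) (hA : 0 < A)
    (hγ0 : 0 < γ) (hγ1 : γ < 1) (hR : 0 < R)
    (hsq : 3 * Real.sqrt A < Real.sqrt (12 * Real.sqrt (2 * L * A * (1 - γ)) * R))
    (hρ0 : 0 < ρ)
    (hρ : ρ < (Real.sqrt (12 * Real.sqrt (2 * L * A * (1 - γ)) * R) -
      3 * Real.sqrt A) ^ 2) :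
    ∀ k : ℝ, 0 < k →
      Real.sqrt L / (3 * Real.sqrt (2 * A)) *
          (Real.sqrt (ρ / (2 * L)) * (k + 1) - R) <
        k * (k + 1) * Real.sqrt (1 - γ) / 2 := by
  intro k hk
  set s2 := Real.sqrt 2 with hs2def
  set sA := Real.sqrt A with hsAdef
  set sL := Real.sqrt L with hsLdef
  set sρ := Real.sqrt ρ with hsρdef
  set g := Real.sqrt (1 - γ) with hgdef
  have hγ : (0:ℝ) < 1 - γ := by linarith
  have hs2 : 0 < s2 := Real.sqrt_pos.mpr (by norm_num)
  have hsA : 0 < sA := Real.sqrt_pos.mpr hA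
  have hsL : 0 < sL := Real.sqrt_pos.mpr hL
  have hsρ : 0 < sρ := Real.sqrt_pos.mpr hρ0
  have hg : 0 < g := Real.sqrt_pos.mpr hγ
  have hs2sq : s2 ^ 2 = 2 := Real.sq_sqrt (by norm_num)
  have hsAsq : sA ^ 2 = A := Real.sq_sqrt hA.le
  have hsLsq : sL ^ 2 = L := Real.sq_sqrt hL.le
  have hsρsq : sρ ^ 2 = ρ := Real.sq_sqrt hρ0.le
  have hgsq : g ^ 2 = 1 - γ := Real.sq_sqrt hγ.le
  have hg1 : g < 1 := by
    nlinarith [hgsq, hg]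
  -- rewrite the inner sqrt
  have hinner : Real.sqrt (2 * L * A * (1 - γ)) = s2 * sL * sA * g := by
    rw [show 2 * L * A * (1 - γ) = (s2 * sL * sA * g) ^ 2 by
      rw [mul_pow, mul_pow, mul_pow, hs2sq, hsLsq, hsAsq, hgsq]]
    exact Real.sqrt_sq (by positivity)
  rw [hinner] at hsq hρ
  -- key inequality: (sρ + 3 sA)^2 < 12 s2 sL sA g R
  have hXarg : (0:ℝ) ≤ 12 * (s2 * sL * sA * g) * R := by positivity
  have hkey : (sρ + 3 * sA) ^ 2 < 12 * (s2 * sL * sA * g) * R := by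
    have h1 : sρ < Real.sqrt (12 * (s2 * sL * sA * g) * R) - 3 * sA := by
      have h2 := Real.sqrt_lt_sqrt hρ0.le hρ
      rwa [Real.sqrt_sq (by linarith)] at h2
    have h3 : sρ + 3 * sA < Real.sqrt (12 * (s2 * sL * sA * g) * R) := by linarith
    calc (sρ + 3 * sA) ^ 2 < Real.sqrt (12 * (s2 * sL * sA * g) * R) ^ 2 := by
          nlinarith [Real.sqrt_nonneg (12 * (s2 * sL * sA * g) * R)]
      _ = 12 * (s2 * sL * sA * g) * R := Real.sq_sqrt hXarg
  -- rewrite the sqrt's in the goal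
  have h2A : Real.sqrt (2 * A) = s2 * sA := by
    rw [show 2 * A = (s2 * sA) ^ 2 by rw [mul_pow, hs2sq, hsAsq]]
    exact Real.sqrt_sq (by positivity)
  have hρL : Real.sqrt (ρ / (2 * L)) = sρ / (s2 * sL) := by
    rw [show ρ / (2 * L) = (sρ / (s2 * sL)) ^ 2 by
      rw [div_pow, mul_pow, hs2sq, hsLsq, hsρsq]]
    exact Real.sqrt_sq (by positivity)
  rw [h2A, hρL]
  rw [lt_div_iff₀ (by norm_num : (0:ℝ) < 2)]
  rw [div_mul_eq_mul_div, div_mul_eq_mul_div, div_lt_iff₀ (by positivity)]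
  have hexp : sL * (sρ / (s2 * sL) * (k + 1) - R) * 2 =
      (s2 * sρ * (k + 1) - 2 * sL * R) * sL / sL := by
    field_simp
    linear_combination (-(sρ * k) - sρ) * hs2sq
  rw [hexp, mul_div_assoc, div_self hsL.ne', mul_one]
  -- now: s2 * sρ * (k+1) - 2 sL R < k(k+1) g * (3 * (s2 * sA))
  have h1 : 0 ≤ s2 * (6 * sA * g * k + 3 * sA * g - sρ) ^ 2 := by positivity
  have h2 : s2 * ((sρ + 3 * sA) ^ 2) < s2 * (12 * (s2 * sL * sA * g) * R) :=
    mul_lt_mul_of_pos_left hkey hs2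
  have h3 : 0 ≤ s2 * ((1 - g) * (9 * sA ^ 2 * (1 + g) + 6 * sA * sρ)) := by
    apply mul_nonneg hs2.le
    apply mul_nonneg (by linarith)
    positivity
  have h4 : s2 ^ 2 * (sL * sA * g * R) = 2 * (sL * sA * g * R) := by rw [hs2sq]
  have h12 : (0:ℝ) < 12 * (sA * g) := by positivity
  have hT : 0 < 12 * (sA * g) *
      (k * (k + 1) * g * (3 * (s2 * sA)) - (s2 * sρ * (k + 1) - 2 * sL * R)) := by
    linarith [h1, h2, h3, h4]
  have hT2 := div_pos hT h12
  rw [mul_div_cancel_left₀ _ h12.ne'] at hT2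
  linarith
end

section
/- Let k ≥ 1 be an integer and γ ∈ (0,1) a real; set c = ln(1/√(1−γ)) > 0. For λ > 0 define M(λ) = ⌈ 1/(λ·√(1−γ)·c) ⌉ and F(λ) = M(λ)·(M(λ)−1)·√(1−γ)/2 + (k − M(λ) + 1)/(λ·c). Then: (a) for every integer n with 1 ≤ n ≤ k, F(1/(n·√(1−γ)·c)) = n·(2k+1−n)·√(1−γ)/2; (b) F is continuous and strictly decreasing on the interval [1/(k·√(1−γ)·c), ∞), with F(1/(k·√(1−γ)·c)) = k(k+1)·√(1−γ)/2 and F(λ) → 0 as λ → ∞; and (c) for every real D with 0 < D < k(k+1)·√(1−γ)/2 there exists a unique λ ≥ 1/(k·√(1−γ)·c) with F(λ) = D. -/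
open Real Filter

lemma stmt_18_gauss (m : ℕ) : ∑ i ∈ Finset.range m, (i : ℝ) = m * (m - 1) / 2 := by
  induction m with
  | zero => simp
  | succ n ih => rw [Finset.sum_range_succ, ih]; push_cast; ring

/-- Determination of the Lagrange multiplier in the proof of Proposition 5:
properties of the function `F` aggregating the active-constraint values, where
`M(λ)` counts the indices at which the box constraint `lᵢ ≥ 1` is active. -/
theorem stmt_18 (k : ℕ) (hk : 1 ≤ k) (γ : ℝ) (hγ0 : 0 < γ) (hγ1 : γ < 1)
    (c : ℝ) (hc : c = Real.log (1 / Real.sqrt (1 - γ)))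
    (M : ℝ → ℕ) (hM : ∀ lam : ℝ, 0 < lam →
      M lam = ⌈1 / (lam * Real.sqrt (1 - γ) * c)⌉₊)
    (F : ℝ → ℝ) (hF : ∀ lam : ℝ, 0 < lam →
      F lam = (M lam : ℝ) * ((M lam : ℝ) - 1) * Real.sqrt (1 - γ) / 2 +
        ((k : ℝ) - M lam + 1) / (lam * c)) :
    0 < c ∧
    -- (a)
    (∀ n : ℕ, 1 ≤ n → n ≤ k →
      F (1 / (n * Real.sqrt (1 - γ) * c)) =
        (n : ℝ) * (2 * (k : ℝ) + 1 - n) * Real.sqrt (1 - γ) / 2) ∧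
    -- (b)
    ContinuousOn F (Set.Ici (1 / ((k : ℝ) * Real.sqrt (1 - γ) * c))) ∧
    StrictAntiOn F (Set.Ici (1 / ((k : ℝ) * Real.sqrt (1 - γ) * c))) ∧
    F (1 / ((k : ℝ) * Real.sqrt (1 - γ) * c)) =
      (k : ℝ) * ((k : ℝ) + 1) * Real.sqrt (1 - γ) / 2 ∧
    Tendsto F atTop (nhds 0) ∧
    -- (c)
    (∀ D : ℝ, 0 < D → D < (k : ℝ) * ((k : ℝ) + 1) * Real.sqrt (1 - γ) / 2 →
      ∃! lam : ℝ, 1 / ((k : ℝ) * Real.sqrt (1 - γ) * c) ≤ lam ∧ F lam = D) := by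
  have hs0 : (0:ℝ) < 1 - γ := by linarith
  set s : ℝ := Real.sqrt (1 - γ) with hsdef
  have hs : 0 < s := Real.sqrt_pos.mpr hs0
  have hs1 : s < 1 := by
    have h2 : s ^ 2 = 1 - γ := Real.sq_sqrt hs0.le
    nlinarith [hs.le]
  have hc0 : 0 < c := by
    rw [hc]
    apply Real.log_pos
    rw [lt_div_iff₀ hs]; linarith
  have hsne : s ≠ 0 := ne_of_gt hs
  have hcne : c ≠ 0 := ne_of_gt hc0
  have hk0 : (0:ℝ) < (k:ℝ) := by exact_mod_cast hk
  have hkne : (k:ℝ) ≠ 0 := ne_of_gt hk0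
  set lamk : ℝ := 1 / ((k : ℝ) * s * c) with hlamkdef
  have hlamk : 0 < lamk := by positivity
  have hpos : ∀ lam : ℝ, lamk ≤ lam → 0 < lam := fun lam h => lt_of_lt_of_le hlamk h
  -- M lam ≤ k on the interval
  have hMk : ∀ lam : ℝ, lamk ≤ lam → M lam ≤ k := by
    intro lam h
    have hl := hpos lam h
    rw [hM lam hl]
    apply Nat.ceil_le.mpr
    have h1 : lamk * s * c ≤ lam * s * c := by
      have := mul_le_mul_of_nonneg_right (mul_le_mul_of_nonneg_right h hs.le) hc0.le
      linarith
    have h2 : (0:ℝ) < lamk * s * c := by positivity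
    have h3 : 1 / (lam * s * c) ≤ 1 / (lamk * s * c) := one_div_le_one_div_of_le h2 h1
    have h4 : 1 / (lamk * s * c) = (k:ℝ) := by
      rw [hlamkdef]; field_simp
    linarith
  -- the alternative expression of F
  have hFG : ∀ lam : ℝ, lamk ≤ lam →
      F lam = 1 / (lam * c) + ∑ i ∈ Finset.range k, min ((i:ℝ) * s) (1 / (lam * c)) := by
    intro lam h
    have hl := hpos lam h
    have hlne : lam ≠ 0 := ne_of_gt hl
    have hmk : M lam ≤ k := hMk lam h
    have hMceil : M lam = ⌈1 / (lam * s * c)⌉₊ := hM lam hl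
    have hxs : (1 / (lam * s * c)) * s = 1 / (lam * c) := by
      field_simp
    have hsum : ∑ i ∈ Finset.range k, min ((i:ℝ) * s) (1 / (lam * c)) =
        (M lam : ℝ) * ((M lam : ℝ) - 1) / 2 * s + ((k:ℝ) - M lam) * (1 / (lam * c)) := by
      rw [Finset.range_eq_Ico, ← Finset.sum_Ico_consecutive _ (Nat.zero_le (M lam)) hmk]
      have e1 : ∑ i ∈ Finset.Ico 0 (M lam), min ((i:ℝ) * s) (1 / (lam * c)) =
          ∑ i ∈ Finset.Ico 0 (M lam), (i:ℝ) * s := by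
        apply Finset.sum_congr rfl
        intro i hi
        have hi' : i < M lam := (Finset.mem_Ico.mp hi).2
        have hix : (i:ℝ) < 1 / (lam * s * c) := by
          rw [hMceil] at hi'; exact Nat.lt_ceil.mp hi'
        apply min_eq_left
        rw [← hxs]
        exact mul_le_mul_of_nonneg_right hix.le hs.le
      have e2 : ∑ i ∈ Finset.Ico (M lam) k, min ((i:ℝ) * s) (1 / (lam * c)) =
          ∑ i ∈ Finset.Ico (M lam) k, (1 / (lam * c)) := by
        apply Finset.sum_congr rfl
        intro i hi
        have hi' : M lam ≤ i := (Finset.mem_Ico.mp hi).1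
        have hix : 1 / (lam * s * c) ≤ (i:ℝ) := by
          calc 1 / (lam * s * c) ≤ (M lam : ℝ) := by rw [hMceil]; exact Nat.le_ceil _
            _ ≤ (i:ℝ) := by exact_mod_cast hi'
        apply min_eq_right
        rw [← hxs]
        exact mul_le_mul_of_nonneg_right hix hs.le
      rw [e1, e2, Finset.sum_const, Nat.card_Ico, nsmul_eq_mul,
        Nat.cast_sub hmk]
      rw [← Finset.range_eq_Ico, ← Finset.sum_mul, stmt_18_gauss]
    rw [hF lam hl, hsum]
    ring
  -- part (a)
  have parta : ∀ n : ℕ, 1 ≤ n → n ≤ k →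
      F (1 / (n * s * c)) = (n : ℝ) * (2 * (k : ℝ) + 1 - n) * s / 2 := by
    intro n hn1 hnk
    have hn0 : (0:ℝ) < (n:ℝ) := by exact_mod_cast hn1
    have hnne : (n:ℝ) ≠ 0 := ne_of_gt hn0
    have hlam : (0:ℝ) < 1 / ((n:ℝ) * s * c) := by positivity
    have hM1 : M (1 / ((n:ℝ) * s * c)) = n := by
      rw [hM _ hlam]
      have hx : 1 / ((1 / ((n:ℝ) * s * c)) * s * c) = (n:ℝ) := by
        field_simp
      rw [hx, Nat.ceil_natCast]
    rw [hF _ hlam, hM1]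
    have hy : (1 / ((n:ℝ) * s * c)) * c = 1 / ((n:ℝ) * s) := by
      field_simp
    rw [hy]
    field_simp
    ring
  -- value at lamk
  have hvalk : F lamk = (k : ℝ) * ((k : ℝ) + 1) * s / 2 := by
    rw [hlamkdef, parta k hk le_rfl]
    ring
  -- continuity
  have hcontG : ContinuousOn
      (fun lam : ℝ => 1 / (lam * c) + ∑ i ∈ Finset.range k, min ((i:ℝ) * s) (1 / (lam * c)))
      (Set.Ici lamk) := by
    have hdiv : ContinuousOn (fun lam : ℝ => 1 / (lam * c)) (Set.Ici lamk) := by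
      apply ContinuousOn.div continuousOn_const
      · exact (continuousOn_id.mul continuousOn_const)
      · intro x hx
        have := hpos x hx
        positivity
    apply hdiv.add
    apply continuousOn_finset_sum
    intro i _
    exact ContinuousOn.inf continuousOn_const hdiv
  have hcontF : ContinuousOn F (Set.Ici lamk) := by
    apply hcontG.congr
    intro lam h
    exact hFG lam h
  -- strict antitonicity
  have hanti : StrictAntiOn F (Set.Ici lamk) := by
    intro a ha b hb hab
    rw [hFG a ha, hFG b hb]
    have ha0 := hpos a ha
    have hdivlt : 1 / (b * c) < 1 / (a * c) := by
      apply one_div_lt_one_div_of_lt (by positivity)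
      exact mul_lt_mul_of_pos_right hab hc0
    apply add_lt_add_of_lt_of_le hdivlt
    apply Finset.sum_le_sum
    intro i _
    exact min_le_min le_rfl hdivlt.le
  -- tendsto
  have htend : Tendsto F atTop (nhds 0) := by
    have hev : F =ᶠ[atTop] fun lam => (k:ℝ) / (lam * c) := by
      filter_upwards [eventually_ge_atTop (max (1 / (s * c)) 1)] with lam hlam
      have hl1 : (1:ℝ) ≤ lam := le_trans (le_max_right _ _) hlam
      have hl0 : (0:ℝ) < lam := lt_of_lt_of_le one_pos hl1
      have hM1 : M lam = 1 := by
        rw [hM lam hl0]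
        have h1 : 1 / (lam * s * c) ≤ 1 := by
          rw [div_le_one (by positivity)]
          have : 1 / (s * c) ≤ lam := le_trans (le_max_left _ _) hlam
          calc (1:ℝ) = (1 / (s * c)) * (s * c) := by field_simp
            _ ≤ lam * (s * c) := mul_le_mul_of_nonneg_right this (by positivity)
            _ = lam * s * c := by ring
        have h2 : (0:ℝ) < 1 / (lam * s * c) := by positivity
        have h3 : 1 ≤ ⌈1 / (lam * s * c)⌉₊ := Nat.one_le_ceil_iff.mpr h2
        have h4 : ⌈1 / (lam * s * c)⌉₊ ≤ 1 := Nat.ceil_le.mpr (by exact_mod_cast h1)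
        omega
      rw [hF lam hl0, hM1]
      push_cast
      ring
    apply Tendsto.congr' hev.symm
    apply Tendsto.div_atTop tendsto_const_nhds
    exact Tendsto.atTop_mul_const hc0 tendsto_id
  refine ⟨hc0, parta, hcontF, hanti, hvalk, htend, ?_⟩
  -- part (c)
  intro D hD0 hDk
  have hDk' : D < F lamk := by rw [hvalk]; exact hDk
  obtain ⟨b, hb1, hb2⟩ : ∃ b, lamk ≤ b ∧ F b < D := by
    have h1 : ∀ᶠ lam in atTop, F lam < D := htend.eventually_lt_const hD0
    obtain ⟨b, hb⟩ := (h1.and (eventually_ge_atTop lamk)).exists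
    exact ⟨b, hb.2, hb.1⟩
  have hsub : Set.Icc lamk b ⊆ Set.Ici lamk := Set.Icc_subset_Ici_self
  have hmem : D ∈ Set.Icc (F b) (F lamk) := ⟨hb2.le, hDk'.le⟩
  obtain ⟨lam, hlam1, hlam2⟩ := intermediate_value_Icc' hb1 (hcontF.mono hsub) hmem
  refine ⟨lam, ⟨hlam1.1, hlam2⟩, ?_⟩
  intro y hy
  exact hanti.injOn hy.1 (hsub hlam1) (by rw [hy.2, hlam2])
end
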